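/- For every vertex v of the Petersen graph P10, the graph P10 − v has a 2-factor, and every 2-factor of P10 − v is a Hamilton cycle of P10 − v, i.e., a single cycle of length 9. -/

import Mathlib

open SimpleGraph

/-- A 2-factor of `G`: a 2-regular spanning subgraph. -/
def IsTwoFactor {V : Type*} (G H : SimpleGraph V) : Prop :=
  H ≤ G ∧ ∀ v, (H.neighborSet v).ncard = 2

/-- A perfect matching (1-factor) of `G`: a 1-regular spanning subgraph. -/
def IsOneFactor {V : Type*} (G M : SimpleGraph V) : Prop :=
  M ≤ G ∧ ∀ v, (M.neighborSet v).ncard = 1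

/-- Every cycle of `H` has odd length. -/
def AllCyclesOdd {V : Type*} (H : SimpleGraph V) : Prop :=
  ∀ (v : V) (p : H.Walk v v), p.IsCycle → Odd p.length

/-- `G` is odd 2-factored: every cycle of every 2-factor has odd length. -/
def OddTwoFactored {V : Type*} (G : SimpleGraph V) : Prop :=
  ∀ H, IsTwoFactor G H → AllCyclesOdd H

/-- `G` has a proper edge coloring with `n` colors. -/
def EdgeColorable {V : Type*} (G : SimpleGraph V) (n : ℕ) : Prop :=
  ∃ c : Sym2 V → Fin n, ∀ e₁ ∈ G.edgeSet, ∀ e₂ ∈ G.edgeSet,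
    e₁ ≠ e₂ → (∃ v, v ∈ e₁ ∧ v ∈ e₂) → c e₁ ≠ c e₂

/-- The induced subgraph of `G` on `A` contains a cycle. -/
def HasCycleIn {V : Type*} (G : SimpleGraph V) (A : Set V) : Prop :=
  ∃ (v : A) (p : (G.induce A).Walk v v), p.IsCycle

/-- Cyclic edge-connectivity at least `k`: every edge cut separating two
cycle-containing parts has at least `k` edges. -/
def CyclicEdgeConnGe {V : Type*} (G : SimpleGraph V) (k : ℕ) : Prop :=
  ∀ A : Set V, HasCycleIn G A → HasCycleIn G Aᶜ →
    k ≤ {e ∈ G.edgeSet | ∃ x ∈ A, ∃ y ∈ Aᶜ, e = s(x, y)}.ncard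

/-- A snark: connected, cubic, girth at least 5, cyclically 4-edge-connected,
edge chromatic number 4. -/
def IsSnark {V : Type*} (G : SimpleGraph V) : Prop :=
  G.Connected ∧
  (∀ v, (G.neighborSet v).ncard = 3) ∧
  (∀ (v : V) (p : G.Walk v v), p.IsCycle → 5 ≤ p.length) ∧
  CyclicEdgeConnGe G 4 ∧
  EdgeColorable G 4 ∧ ¬ EdgeColorable G 3

/-- A bold-edge `xy` of `G`. -/
def IsBoldEdge {V : Type*} (G : SimpleGraph V) (x y : V) : Prop :=
  G.Adj x y ∧
  (∀ H, IsTwoFactor (G.induce {w | w ≠ x}) H → AllCyclesOdd H) ∧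
  (∀ H, IsTwoFactor (G.induce {w | w ≠ y}) H → AllCyclesOdd H) ∧
  (∀ H, IsTwoFactor G H → H.Adj x y → AllCyclesOdd H) ∧
  (∀ H, IsTwoFactor G H → ¬ H.Adj x y → AllCyclesOdd H)

/-- The graph `(R − {ab, cd}) + {ac, ad, bc, bd}` of condition (iv) of gadget-pairs. -/
def GadgetAux {V : Type*} (R : SimpleGraph V) (a b c d : V) : SimpleGraph V :=
  (R.deleteEdges {s(a, b), s(c, d)}) ⊔
    SimpleGraph.fromEdgeSet {s(a, c), s(a, d), s(b, c), s(b, d)}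

/-- The pair of nonadjacent edges `ab`, `cd` of `R` is a gadget-pair. -/
def IsGadgetPair {V : Type*} (R : SimpleGraph V) (a b c d : V) : Prop :=
  R.Adj a b ∧ R.Adj c d ∧ a ≠ c ∧ a ≠ d ∧ b ≠ c ∧ b ≠ d ∧
  (∀ H, IsTwoFactor R H → H.Adj a b ∨ H.Adj c d) ∧
  (∀ H, IsTwoFactor R H →
    (H.Adj a b ∧ ¬ H.Adj c d) ∨ (¬ H.Adj a b ∧ H.Adj c d) → AllCyclesOdd H) ∧
  (∀ H, IsTwoFactor R H → H.Adj a b → H.Adj c d →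
    AllCyclesOdd H ∧ ¬ H.Reachable a c) ∧
  (∀ e' ∈ ({s(a, c), s(a, d), s(b, c), s(b, d)} : Set (Sym2 V)),
    ∀ H, IsTwoFactor (GadgetAux R a b c d) H → e' ∈ H.edgeSet →
      (∀ e'' ∈ ({s(a, c), s(a, d), s(b, c), s(b, d)} : Set (Sym2 V)),
        e'' ∈ H.edgeSet → e'' = e') →
      ∀ (v : V) (p : H.Walk v v), p.IsCycle →
        (e' ∈ p.edges → Even p.length) ∧ (e' ∉ p.edges → Odd p.length))
/-- The Petersen graph, on outer vertices `Sum.inl j` and inner vertices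
`Sum.inr j` (0-based; `o_{j+1} = Sum.inl j`, `i_{j+1} = Sum.inr j`):
edges `o_j o_{j+1}`, `o_j i_j`, `i_j i_{j+2}` (indices mod 5). -/
def Petersen : SimpleGraph (Fin 5 ⊕ Fin 5) :=
  SimpleGraph.fromRel (fun p q =>
    match p, q with
    | Sum.inl i, Sum.inl j => j = i + 1
    | Sum.inr i, Sum.inr j => j = i + 2
    | Sum.inl i, Sum.inr j => i = j
    | Sum.inr _, Sum.inl _ => False)

/-- The edge set `H = {o₁i₁, i₂i₅, o₃o₄}` of the Petersen graph. -/
def PetersenH : Set (Sym2 (Fin 5 ⊕ Fin 5)) :=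
  {s(Sum.inl 0, Sum.inr 0), s(Sum.inr 1, Sum.inr 4), s(Sum.inl 2, Sum.inl 3)}

/- ### Auxiliary material -/

instance instDecPet : DecidableRel Petersen.Adj := fun p q => by
  unfold Petersen
  rw [SimpleGraph.fromRel_adj]
  cases p <;> cases q <;> exact inferInstanceAs (Decidable _)

set_option maxRecDepth 100000 in
theorem petersen_no_tri : ∀ a b c : Fin 5 ⊕ Fin 5,
    Petersen.Adj a b → Petersen.Adj b c → Petersen.Adj c a → False := by decide

set_option maxRecDepth 100000 in
set_option synthInstance.maxSize 1000 in
set_option synthInstance.maxHeartbeats 1000000 in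
set_option maxHeartbeats 2000000 in
theorem petersen_no_c4 : ∀ a b c d : Fin 5 ⊕ Fin 5,
    Petersen.Adj a b → Petersen.Adj b c → Petersen.Adj c d → Petersen.Adj d a →
      a = c ∨ b = d := by decide

def rotV (j : Fin 5) : (Fin 5 ⊕ Fin 5) → (Fin 5 ⊕ Fin 5)
  | .inl i => .inl (i + j)
  | .inr i => .inr (i + j)

def baseOuter : List (Fin 5 ⊕ Fin 5) :=
  [.inl 1, .inl 2, .inl 3, .inl 4, .inr 4, .inr 2, .inr 0, .inr 3, .inr 1]

def baseInner : List (Fin 5 ⊕ Fin 5) :=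
  [.inl 0, .inl 1, .inr 1, .inr 3, .inl 3, .inl 2, .inr 2, .inr 4, .inl 4]

def cycList : (Fin 5 ⊕ Fin 5) → List (Fin 5 ⊕ Fin 5)
  | .inl j => baseOuter.map (rotV j)
  | .inr j => baseInner.map (rotV j)

def Fv (v : Fin 5 ⊕ Fin 5) : SimpleGraph (Fin 5 ⊕ Fin 5) :=
  SimpleGraph.fromRel
    (fun x y => ((cycList v).zip ((cycList v).rotate 1)).contains (x, y) = true)

instance instDecFv (v : Fin 5 ⊕ Fin 5) : DecidableRel (Fv v).Adj := fun a b => by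
  unfold Fv; simp only [SimpleGraph.fromRel_adj]; infer_instance

set_option maxRecDepth 100000 in
theorem Fv_le : ∀ v x y, (Fv v).Adj x y → Petersen.Adj x y ∧ x ≠ v ∧ y ≠ v := by decide

set_option maxRecDepth 100000 in
theorem Fv_deg : ∀ v w, w ≠ v → ((Fv v).neighborFinset w).card = 2 := by decide

section Generic

set_option linter.unusedSectionVars false
variable {V : Type*} [Fintype V] [DecidableEq V] {H : SimpleGraph V}

open SimpleGraph.Walk

lemma mem_support_iff_tail {u : V} {c : H.Walk u u} (hc : c ≠ Walk.nil) {z : V} :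
    z ∈ c.support ↔ z ∈ c.support.tail := by
  cases c with
  | nil => exact absurd rfl hc
  | cons h q =>
    rw [Walk.support_cons]
    constructor
    · intro hz
      rcases List.mem_cons.mp hz with rfl | hz
      · exact q.end_mem_support
      · exact hz
    · exact fun hz => List.mem_cons_of_mem _ hz

lemma cycle_start_nbrs (hreg : ∀ x, (H.neighborSet x).ncard = 2) {u : V}
    {c : H.Walk u u} (hc : c.IsCycle) {y : V} (hy : H.Adj u y) : y ∈ c.support := by
  cases c with
  | nil => simpa using hc.three_le_length
  | @cons _ x _ h q =>
    have hq : q.IsPath ∧ ¬s(u, x) ∈ q.edges := (Walk.cons_isCycle_iff q h).mp hc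
    obtain ⟨y', h2, q2, hr⟩ := Walk.exists_eq_cons_of_ne h.ne q.reverse
    have hxy' : x ≠ y' := by
      rintro rfl
      have hrp : q.reverse.IsPath := hq.1.reverse
      rw [hr] at hrp
      have h5 := (Walk.cons_isPath_iff _ _).mp hrp
      have hq2 : q2 = Walk.nil := (Walk.isPath_iff_eq_nil).mp h5.1
      have hl : q.length = 1 := by
        have := q.length_reverse
        rw [hr, hq2] at this
        simpa using this.symm
      have h3 := hc.three_le_length
      rw [Walk.length_cons, hl] at h3
      omega
    have hset : ({x, y'} : Set V) = H.neighborSet u := by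
      apply Set.eq_of_subset_of_ncard_le
      · rintro z (rfl | rfl)
        · exact h
        · exact h2
      · rw [hreg u, Set.ncard_pair hxy']
      · exact Set.toFinite _
    have hymem : y ∈ ({x, y'} : Set V) := by rw [hset]; exact hy
    rw [Walk.support_cons]
    rcases hymem with rfl | heq
    · exact List.mem_cons_of_mem _ q.start_mem_support
    · subst heq
      have : y ∈ q.reverse.support := by
        rw [hr, Walk.support_cons]
        exact List.mem_cons_of_mem _ q2.start_mem_support
      rw [Walk.support_reverse, List.mem_reverse] at this
      exact List.mem_cons_of_mem _ this

lemma cycle_ne_nil {u : V} {c : H.Walk u u} (hc : c.IsCycle) : c ≠ Walk.nil := by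
  intro h
  subst h
  simpa using hc.three_le_length

lemma cycle_closed (hreg : ∀ x, (H.neighborSet x).ncard = 2) {u x y : V}
    {c : H.Walk u u} (hc : c.IsCycle) (hx : x ∈ c.support) (hy : H.Adj x y) :
    y ∈ c.support := by
  have hc' := hc.rotate hx
  have h1 : y ∈ (c.rotate x hx).support := cycle_start_nbrs hreg hc' hy
  rw [mem_support_iff_tail (cycle_ne_nil hc'), (Walk.support_rotate c x hx).mem_iff] at h1
  exact (mem_support_iff_tail (cycle_ne_nil hc)).mpr h1

lemma reach_subset_support (hreg : ∀ x, (H.neighborSet x).ncard = 2) {u : V}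
    {c : H.Walk u u} (hc : c.IsCycle) {z : V} (hz : H.Reachable u z) :
    z ∈ c.support := by
  obtain ⟨w⟩ := hz
  have key : ∀ {a b : V} (w : H.Walk a b), a ∈ c.support → b ∈ c.support := by
    intro a b w
    induction w with
    | nil => exact id
    | cons h p ih => exact fun ha => ih (cycle_closed hreg hc ha h)
  exact key w c.start_mem_support

lemma exists_cycle_reachable (hreg : ∀ x, (H.neighborSet x).ncard = 2) (v : V) :
    ∃ (u : V) (c : H.Walk u u), c.IsCycle ∧ H.Reachable v u := by
  by_contra hno
  push_neg at hno
  have key : ∀ k : ℕ, ∃ (w : V) (p : H.Walk v w), p.IsPath ∧ k ≤ p.length := by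
    intro k
    induction k with
    | zero => exact ⟨v, Walk.nil, Walk.IsPath.nil, Nat.zero_le _⟩
    | succ k ih =>
      obtain ⟨w, p, hp, hk⟩ := ih
      obtain ⟨a, b, hab, hN⟩ := Set.ncard_eq_two.mp (hreg w)
      have haw : H.Adj w a := by
        have : a ∈ H.neighborSet w := by rw [hN]; exact Set.mem_insert _ _
        exact this
      have hbw : H.Adj w b := by
        have : b ∈ H.neighborSet w := by rw [hN]; exact Set.mem_insert_iff.mpr (Or.inr rfl)
        exact this
      cases p with
      | nil =>
        refine ⟨a, Walk.cons haw Walk.nil, ?_, ?_⟩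
        · rw [Walk.cons_isPath_iff]
          exact ⟨Walk.IsPath.nil, by simp [haw.ne]⟩
        · have : k = 0 := by simpa using hk
          simp [this]
      | @cons _ x _ hadj q =>
        have hvw : v ≠ w := by
          rintro rfl
          rw [Walk.isPath_iff_eq_nil] at hp
          simp at hp
        obtain ⟨x', h', q', hr⟩ :=
          Walk.exists_eq_cons_of_ne (Ne.symm hvw) (Walk.cons hadj q).reverse
        obtain ⟨u', hu'w, hu'x⟩ : ∃ u', H.Adj w u' ∧ u' ≠ x' := by
          by_cases hax : a = x'
          · exact ⟨b, hbw, fun hbx => hab (by rw [hax, hbx])⟩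
          · exact ⟨a, haw, hax⟩
        by_cases hmem : u' ∈ (Walk.cons hadj q).support
        · exfalso
          have hd : ((Walk.cons hadj q).dropUntil u' hmem).IsPath := hp.dropUntil hmem
          have hedge : ¬s(w, u') ∈ ((Walk.cons hadj q).dropUntil u' hmem).edges := by
            intro hin
            have hin' : s(w, u') ∈ (Walk.cons hadj q).edges :=
              Walk.edges_dropUntil_subset _ hmem hin
            have hin'' : s(w, u') ∈ (Walk.cons hadj q).reverse.edges := by
              rw [Walk.edges_reverse, List.mem_reverse]; exact hin'
            rw [hr, Walk.edges_cons] at hin''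
            rcases List.mem_cons.mp hin'' with h1 | h2
            · rcases Sym2.eq_iff.mp h1 with ⟨_, h⟩ | ⟨h, _⟩
              · exact hu'x h
              · exact h'.ne h
            · have hws : w ∈ q'.support := Walk.fst_mem_support_of_mem_edges q' h2
              have hrp : (Walk.cons hadj q).reverse.IsPath := hp.reverse
              rw [hr, Walk.cons_isPath_iff] at hrp
              exact hrp.2 hws
          have hcyc := SimpleGraph.Path.cons_isCycle
            ⟨(Walk.cons hadj q).dropUntil u' hmem, hd⟩ hu'w hedge
          exact hno w _ hcyc ⟨Walk.cons hadj q⟩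
        · refine ⟨u', (Walk.cons hadj q).concat hu'w, ?_, ?_⟩
          · rw [Walk.isPath_def, Walk.support_concat]
            rw [List.nodup_append]
            refine ⟨hp.support_nodup, List.nodup_singleton _, ?_⟩
            intro z hz z' hz' hzz
            rw [List.mem_singleton] at hz'
            subst hz' hzz
            exact hmem hz
          · rw [Walk.length_concat]
            omega
  obtain ⟨w, p, hp, hk⟩ := key (Fintype.card V)
  exact absurd hp.length_lt (by omega)

theorem twoRegular_girth5 (hcard : Fintype.card V = 9)
    (hreg : ∀ x, (H.neighborSet x).ncard = 2)
    (hgirth : ∀ (u : V) (c : H.Walk u u), c.IsCycle → 5 ≤ c.length) :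
    H.Connected ∧ ∀ (u : V) (c : H.Walk u u), c.IsCycle → c.length = 9 := by
  have hconn : H.Connected := by
    rw [connected_iff]
    refine ⟨fun x y => ?_, Fintype.card_pos_iff.mp (by omega)⟩
    obtain ⟨ux, cx, hcx, hrx⟩ := exists_cycle_reachable hreg x
    obtain ⟨uy, cy, hcy, hry⟩ := exists_cycle_reachable hreg y
    by_cases hxy : H.Reachable ux uy
    · exact hrx.trans (hxy.trans hry.symm)
    · exfalso
      have hdisj : ∀ z, z ∈ cx.support → z ∈ cy.support → False := by
        intro z hzx hzy
        exact hxy (SimpleGraph.Reachable.trans ⟨cx.takeUntil z hzx⟩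
          (SimpleGraph.Reachable.symm ⟨cy.takeUntil z hzy⟩))
      have hnodup : (cx.support.tail ++ cy.support.tail).Nodup := by
        rw [List.nodup_append]
        exact ⟨hcx.support_nodup, hcy.support_nodup, fun a ha b hb hab =>
          hdisj a (List.mem_of_mem_tail ha) (List.mem_of_mem_tail (hab ▸ hb))⟩
      have hle := hnodup.length_le_card
      rw [List.length_append] at hle
      have h1 := hgirth _ _ hcx
      have h2 := hgirth _ _ hcy
      have l1 := cx.length_support
      have l2 := cy.length_support
      have t1 := cx.support.length_tail
      have t2 := cy.support.length_tail
      omega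
  refine ⟨hconn, fun u c hc => ?_⟩
  have hall : ∀ z, z ∈ c.support := fun z =>
    reach_subset_support hreg hc (hconn.preconnected u z)
  have htail : ∀ z, z ∈ c.support.tail := fun z =>
    (mem_support_iff_tail (cycle_ne_nil hc)).mp (hall z)
  have huniv : c.support.tail.toFinset = Finset.univ :=
    Finset.eq_univ_iff_forall.mpr (fun z => List.mem_toFinset.mpr (htail z))
  have hlen : c.support.tail.length = 9 := by
    rw [← List.toFinset_card_of_nodup hc.support_nodup, huniv, Finset.card_univ, hcard]
  have l1 := c.length_support
  have t1 := c.support.length_tail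
  omega

end Generic

theorem petersen_girth : ∀ (u : Fin 5 ⊕ Fin 5) (c : Petersen.Walk u u),
    c.IsCycle → 5 ≤ c.length := by
  intro u c hc
  by_contra hlt
  push_neg at hlt
  have h3 := hc.three_le_length
  have hcase : c.length = 3 ∨ c.length = 4 := by omega
  rcases hcase with h | h
  · cases c with
    | nil => simp at h
    | cons h1 c =>
      cases c with
      | nil => simp at h
      | cons h2 c =>
        cases c with
        | nil => simp at h
        | cons h3' c =>
          cases c with
          | nil => exact petersen_no_tri _ _ _ h1 h2 h3'
          | cons h4 c => simp [Walk.length_cons] at h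
  · cases c with
    | nil => simp at h
    | cons h1 c =>
      cases c with
      | nil => simp at h
      | cons h2 c =>
        cases c with
        | nil => simp at h
        | cons h3' c =>
          cases c with
          | nil => simp at h
          | cons h4 c =>
            cases c with
            | nil =>
              have hnd := hc.support_nodup
              simp [Walk.support_cons] at hnd
              rcases petersen_no_c4 _ _ _ _ h1 h2 h3' h4 with heq | heq
              · exact hnd.2.1.2 heq.symm
              · exact hnd.1.2.1 heq
            | cons h5 c => simp [Walk.length_cons] at h

theorem petersen_deleteVert_twoFactors_are_nine_cycles' :
    ∀ v : Fin 5 ⊕ Fin 5,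
      (∃ H, (H ≤ (Petersen.induce {w | w ≠ v}) ∧ ∀ x, (H.neighborSet x).ncard = 2)) ∧
      (∀ H, (H ≤ (Petersen.induce {w | w ≠ v}) ∧ ∀ x, (H.neighborSet x).ncard = 2) →
        H.Connected ∧ ∀ (u) (p : H.Walk u u), p.IsCycle → p.length = 9) := by
  intro v
  constructor
  · refine ⟨(Fv v).induce {w | w ≠ v}, fun a b hab => ?_, fun w => ?_⟩
    · exact (Fv_le v a b hab).1
    · have himg : Subtype.val '' (((Fv v).induce {w | w ≠ v}).neighborSet w) =
          (Fv v).neighborSet ↑w := by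
        ext z
        constructor
        · rintro ⟨z', hz', rfl⟩; exact hz'
        · intro hz
          exact ⟨⟨z, (Fv_le v _ _ hz).2.2⟩, hz, rfl⟩
      have h2 : (((Fv v).induce {w | w ≠ v}).neighborSet w).ncard =
          ((Fv v).neighborSet ↑w).ncard := by
        rw [← himg, Set.ncard_image_of_injective _ Subtype.val_injective]
      rw [h2, Set.ncard_eq_toFinset_card', ← SimpleGraph.neighborFinset_def]
      exact Fv_deg v ↑w w.2
  · intro H hH
    have hcard : Fintype.card ↥{w : Fin 5 ⊕ Fin 5 | w ≠ v} = 9 := by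
      simp [Set.coe_setOf]
    have hgirth : ∀ (u : ↥{w : Fin 5 ⊕ Fin 5 | w ≠ v}) (c : H.Walk u u),
        c.IsCycle → 5 ≤ c.length := by
      intro u c hc
      let f : H →g Petersen :=
        (SimpleGraph.Embedding.induce {w : Fin 5 ⊕ Fin 5 | w ≠ v}).toHom.comp
          (SimpleGraph.Hom.ofLE hH.1)
      have hf : Function.Injective ⇑f := by
        intro a b hab
        exact Subtype.val_injective hab
      have hc' : (c.map f).IsCycle := hc.map hf
      have h5 := petersen_girth _ _ hc'
      rwa [Walk.length_map] at h5
    exact twoRegular_girth5 hcard hH.2 hgirth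


/-- For every vertex `v` of the Petersen graph, `P10 − v` has a
2-factor, and every 2-factor of `P10 − v` is a Hamilton cycle of `P10 − v`,
i.e. a single cycle of length 9. -/
theorem petersen_deleteVert_twoFactors_are_nine_cycles :
    ∀ v : Fin 5 ⊕ Fin 5,
      (∃ H, IsTwoFactor (Petersen.induce {w | w ≠ v}) H) ∧
      (∀ H, IsTwoFactor (Petersen.induce {w | w ≠ v}) H →
        H.Connected ∧ ∀ (u) (p : H.Walk u u), p.IsCycle → p.length = 9) :=
  petersen_deleteVert_twoFactors_are_nine_cycles'
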